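/- Let h > 0 and γ ∈ (0,1). Define q(z) := z⁴ + (h+1)(γ−4)z³ − (3(h²+1)(γ−2) − h(γ²−26γ+4))z² + (1+h)((h²+1)(3γ−4) + h(−20γ²+10γ+8))z − (γ−1)((h−1)² + 4γh)². Then q(0) > 0, q((1+√h)²) < 0, and q(z) → +∞ as z → +∞; consequently q has at least two distinct positive real roots. -/
import Mathlib

open Filter

noncomputable def q (h γ : ℝ) (z : ℝ) : ℝ :=
  z^4 + (h + 1) * (γ - 4) * z^3
    - (3 * (h^2 + 1) * (γ - 2) - h * (γ^2 - 26 * γ + 4)) * z^2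
    + (1 + h) * ((h^2 + 1) * (3 * γ - 4) + h * (-20 * γ^2 + 10 * γ + 8)) * z
    - (γ - 1) * ((h - 1)^2 + 4 * γ * h)^2

theorem q_sign_changes (h γ : ℝ) (hh : 0 < h) (hγ : γ ∈ Set.Ioo (0:ℝ) 1) :
    0 < q h γ 0 ∧ q h γ ((1 + Real.sqrt h)^2) < 0 ∧
    Tendsto (q h γ) atTop atTop ∧
    ∃ z₁ z₂ : ℝ, 0 < z₁ ∧ 0 < z₂ ∧ z₁ ≠ z₂ ∧ q h γ z₁ = 0 ∧ q h γ z₂ = 0 := by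
  obtain ⟨hγ0, hγ1⟩ := hγ
  -- q 0 > 0
  have h1 : 0 < q h γ 0 := by
    have hX : 0 < (h - 1)^2 + 4 * γ * h := by nlinarith
    have : 0 < (1 - γ) * ((h - 1)^2 + 4 * γ * h)^2 :=
      mul_pos (by linarith) (pow_pos hX 2)
    simp only [q]
    nlinarith [this]
  -- q at (1+√h)^2 < 0
  set s := Real.sqrt h with hs
  have hs0 : 0 < s := Real.sqrt_pos.mpr hh
  have hs2 : s^2 = h := Real.sq_sqrt hh.le
  have h2 : q h γ ((1 + s)^2) < 0 := by
    have key : q h γ ((1 + s)^2) =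
        -(s^2 * γ * (27*γ + 64*s + 36*s*γ + 128*s^2 + 2*s^2*γ + 16*s^2*γ^2
          + 64*s^3 + 36*s^3*γ + 27*s^4*γ)) := by
      rw [← hs2]; simp only [q]; ring
    rw [key]
    have : 0 < 27*γ + 64*s + 36*s*γ + 128*s^2 + 2*s^2*γ + 16*s^2*γ^2
        + 64*s^3 + 36*s^3*γ + 27*s^4*γ := by positivity
    have hp : 0 < s^2 * γ * (27*γ + 64*s + 36*s*γ + 128*s^2 + 2*s^2*γ + 16*s^2*γ^2
        + 64*s^3 + 36*s^3*γ + 27*s^4*γ) := mul_pos (mul_pos (pow_pos hs0 2) hγ0) this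
    linarith
  -- tendsto
  have h3 : Tendsto (q h γ) atTop atTop := by
    obtain ⟨P, hPev, hPdeg, hPlc⟩ :
        ∃ P : Polynomial ℝ, (∀ z, P.eval z = q h γ z) ∧ 0 < P.degree ∧ 0 ≤ P.leadingCoeff := by
      refine ⟨Polynomial.X^4 + Polynomial.C ((h + 1) * (γ - 4)) * Polynomial.X^3
        + Polynomial.C (-(3 * (h^2 + 1) * (γ - 2) - h * (γ^2 - 26 * γ + 4))) * Polynomial.X^2
        + Polynomial.C ((1 + h) * ((h^2 + 1) * (3 * γ - 4) + h * (-20 * γ^2 + 10 * γ + 8)))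
            * Polynomial.X
        + Polynomial.C (-((γ - 1) * ((h - 1)^2 + 4 * γ * h)^2)), ?_, ?_, ?_⟩
      · intro z
        simp only [Polynomial.eval_add, Polynomial.eval_mul, Polynomial.eval_pow,
          Polynomial.eval_X, Polynomial.eval_C, q]
        ring
      · have hdeg : (Polynomial.X^4 + Polynomial.C ((h + 1) * (γ - 4)) * Polynomial.X^3
          + Polynomial.C (-(3 * (h^2 + 1) * (γ - 2) - h * (γ^2 - 26 * γ + 4))) * Polynomial.X^2
          + Polynomial.C ((1 + h) * ((h^2 + 1) * (3 * γ - 4) + h * (-20 * γ^2 + 10 * γ + 8)))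
              * Polynomial.X
          + Polynomial.C (-((γ - 1) * ((h - 1)^2 + 4 * γ * h)^2)) : Polynomial ℝ).degree = 4 := by
          compute_degree!
        rw [hdeg]; norm_num
      · have hM : (Polynomial.X^4 + Polynomial.C ((h + 1) * (γ - 4)) * Polynomial.X^3
          + Polynomial.C (-(3 * (h^2 + 1) * (γ - 2) - h * (γ^2 - 26 * γ + 4))) * Polynomial.X^2
          + Polynomial.C ((1 + h) * ((h^2 + 1) * (3 * γ - 4) + h * (-20 * γ^2 + 10 * γ + 8)))
              * Polynomial.X
          + Polynomial.C (-((γ - 1) * ((h - 1)^2 + 4 * γ * h)^2)) : Polynomial ℝ).Monic := by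
          monicity!
        rw [hM.leadingCoeff]; norm_num
    have hq : q h γ = fun z => P.eval z := funext fun z => (hPev z).symm
    rw [hq]
    exact P.tendsto_atTop_of_leadingCoeff_nonneg hPdeg hPlc
  refine ⟨h1, h2, h3, ?_⟩
  -- roots by IVT
  have hcont : Continuous (q h γ) := by
    unfold q; continuity
  have hzpos : (0:ℝ) < (1 + s)^2 := by positivity
  have hroot1 : ∃ z₁ ∈ Set.Ioo (0:ℝ) ((1 + s)^2), q h γ z₁ = 0 := by
    have := intermediate_value_Ioo' (le_of_lt hzpos) (hcont.continuousOn)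
      (a := (0:ℝ)) (b := (1 + s)^2)
    have hmem : (0:ℝ) ∈ Set.Ioo (q h γ ((1 + s)^2)) (q h γ 0) := ⟨h2, h1⟩
    obtain ⟨z₁, hz₁, hq₁⟩ := this hmem
    exact ⟨z₁, hz₁, hq₁⟩
  obtain ⟨z₁, hz₁mem, hz₁⟩ := hroot1
  obtain ⟨M, hM⟩ := ((h3.eventually (eventually_gt_atTop 0)).and
    (eventually_gt_atTop ((1 + s)^2))).exists
  have hroot2 : ∃ z₂ ∈ Set.Ioo ((1 + s)^2) M, q h γ z₂ = 0 := by
    have := intermediate_value_Ioo (le_of_lt hM.2) (hcont.continuousOn)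
      (a := (1 + s)^2) (b := M)
    have hmem : (0:ℝ) ∈ Set.Ioo (q h γ ((1 + s)^2)) (q h γ M) := ⟨h2, hM.1⟩
    obtain ⟨z₂, hz₂, hq₂⟩ := this hmem
    exact ⟨z₂, hz₂, hq₂⟩
  obtain ⟨z₂, hz₂mem, hz₂⟩ := hroot2
  exact ⟨z₁, z₂, hz₁mem.1, lt_trans hzpos hz₂mem.1, by
    intro hEq; exact absurd (hEq ▸ hz₁mem.2) (not_lt.mpr hz₂mem.1.le), hz₁, hz₂⟩
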